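/- The twisted adjoint representation restricted to the pin group, Ad~ : Pin(r,s) → O(r,s), is a surjective group homomorphism with kernel {1, -1}; i.e., it is a double covering. -/

import Mathlib

noncomputable section

/-- The standard bilinear form of signature `(r,s)` on `ℝ^{r+s}` (the polarization of
`Q_{r,s}`). -/
def Brs (r s : ℕ) (x y : Fin (r + s) → ℝ) : ℝ :=
  ∑ i : Fin (r + s), (if (i : ℕ) < r then (1 : ℝ) else -1) * x i * y i

/-- The quadratic form generating the Clifford algebra `Cl_{r,s}` with the paper's convention
`z ⊗ z + ⟨z,z⟩_{r,s} = 0`, i.e. `ι z * ι z = -⟨z,z⟩_{r,s} • 1`. -/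
def Qrs (r s : ℕ) : QuadraticForm ℝ (Fin (r + s) → ℝ) :=
  QuadraticMap.weightedSumSquares ℝ (fun i : Fin (r + s) => if (i : ℕ) < r then (-1 : ℝ) else 1)
/-- `φ ∈ Pin(r,s)` iff `φ` is a product of vectors of scalar square `±1`. -/
def IsPin (r s : ℕ) (φ : CliffordAlgebra (Qrs r s)) : Prop :=
  ∃ l : List (Fin (r + s) → ℝ),
    (∀ v ∈ l, Brs r s v v = 1 ∨ Brs r s v v = -1) ∧
    φ = (l.map (CliffordAlgebra.ι (Qrs r s))).prod

namespace S4
variable (r s : ℕ)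

lemma Brs_symm (x y : Fin (r+s) → ℝ) : Brs r s x y = Brs r s y x := by
  unfold Brs; exact Finset.sum_congr rfl fun i _ => by ring

/-- `B v ·` as a linear functional. -/
def Bl (v : Fin (r+s) → ℝ) : (Fin (r+s) → ℝ) →ₗ[ℝ] ℝ where
  toFun w := Brs r s v w
  map_add' x y := by unfold Brs; rw [← Finset.sum_add_distrib]; exact Finset.sum_congr rfl fun i _ => by simp only [Pi.add_apply]; split <;> ring
  map_smul' c x := by
    unfold Brs
    simp only [RingHom.id_apply, smul_eq_mul, Finset.mul_sum]
    exact Finset.sum_congr rfl fun i _ => by simp only [Pi.smul_apply, smul_eq_mul]; ring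

@[simp] lemma Bl_apply (v w : Fin (r+s) → ℝ) : Bl r s v w = Brs r s v w := rfl

lemma Brs_add_right (v x y : Fin (r+s) → ℝ) : Brs r s v (x + y) = Brs r s v x + Brs r s v y :=
  (Bl r s v).map_add x y

lemma Brs_smul_right (v : Fin (r+s) → ℝ) (c : ℝ) (x : Fin (r+s) → ℝ) :
    Brs r s v (c • x) = c * Brs r s v x := (Bl r s v).map_smul c x

lemma Brs_add_left (x y v : Fin (r+s) → ℝ) : Brs r s (x + y) v = Brs r s x v + Brs r s y v := by
  rw [Brs_symm, Brs_add_right, Brs_symm r s v x, Brs_symm r s v y]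

lemma Brs_smul_left (c : ℝ) (x v : Fin (r+s) → ℝ) : Brs r s (c • x) v = c * Brs r s x v := by
  rw [Brs_symm, Brs_smul_right, Brs_symm]

lemma Brs_sub_right (v x y : Fin (r+s) → ℝ) : Brs r s v (x - y) = Brs r s v x - Brs r s v y :=
  (Bl r s v).map_sub x y

lemma Brs_neg_right (v x : Fin (r+s) → ℝ) : Brs r s v (-x) = - Brs r s v x :=
  (Bl r s v).map_neg x

lemma Qrs_eq (v : Fin (r+s) → ℝ) : Qrs r s v = - Brs r s v v := by
  unfold Qrs Brs
  rw [QuadraticMap.weightedSumSquares_apply, ← Finset.sum_neg_distrib]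
  exact Finset.sum_congr rfl fun i _ => by split <;> (simp only [smul_eq_mul]; ring)

lemma polar_Qrs (v w : Fin (r+s) → ℝ) :
    QuadraticMap.polar (Qrs r s) v w = -2 * Brs r s v w := by
  unfold QuadraticMap.polar
  rw [Qrs_eq, Qrs_eq, Qrs_eq]
  have h1 := Brs_add_left r s v w (v + w)
  have h2 := Brs_add_right r s v v w
  have h3 := Brs_add_right r s w v w
  have h4 := Brs_symm r s w v
  nlinarith [h1, h2, h3]

lemma Brs_single (v : Fin (r+s) → ℝ) (j : Fin (r+s)) :
    Brs r s v (Pi.single j 1) = (if (j:ℕ) < r then (1:ℝ) else -1) * v j := by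
  unfold Brs
  rw [Finset.sum_eq_single j]
  · simp
  · intro i _ hij; simp [Pi.single_apply, hij]
  · simp

lemma Brs_nondeg (x : Fin (r+s) → ℝ) (h : ∀ y, Brs r s x y = 0) : x = 0 := by
  funext j
  have := h (Pi.single j 1)
  rw [Brs_single] at this
  split at this <;> [simpa using this; (rw [neg_mul, one_mul, neg_eq_zero] at this; simpa using this)]


/-- Reflection in the hyperplane orthogonal to `v`. -/
def rf (v : Fin (r+s) → ℝ) : (Fin (r+s) → ℝ) →ₗ[ℝ] (Fin (r+s) → ℝ) :=
  LinearMap.id - (2 / Brs r s v v) • ((Bl r s v).smulRight v)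

lemma rf_apply (v x : Fin (r+s) → ℝ) :
    rf r s v x = x - ((2 / Brs r s v v) * Brs r s v x) • v := by
  simp [rf, LinearMap.smulRight, mul_smul]

lemma rf_fix {v x : Fin (r+s) → ℝ} (h : Brs r s v x = 0) : rf r s v x = x := by
  rw [rf_apply, h]; simp

lemma rf_self {v : Fin (r+s) → ℝ} (h : Brs r s v v ≠ 0) : rf r s v v = -v := by
  rw [rf_apply]
  rw [div_mul_cancel₀ _ h]
  module

lemma rf_isometry {v : Fin (r+s) → ℝ} (h : Brs r s v v ≠ 0) (x y : Fin (r+s) → ℝ) :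
    Brs r s (rf r s v x) (rf r s v y) = Brs r s x y := by
  rw [rf_apply, rf_apply]
  set a := (2 / Brs r s v v) * Brs r s v x with ha
  set b := (2 / Brs r s v v) * Brs r s v y with hb
  rw [sub_eq_add_neg x, sub_eq_add_neg y, Brs_add_left, Brs_add_right, Brs_add_right]
  rw [show -(a • v) = (-a) • v by module, show -(b • v) = (-b) • v by module]
  rw [Brs_smul_left, Brs_smul_left, Brs_smul_right, Brs_smul_right]
  rw [Brs_symm r s x v]
  simp only [ha, hb]
  field_simp
  ring

lemma rf_invol {v : Fin (r+s) → ℝ} (h : Brs r s v v ≠ 0) (x : Fin (r+s) → ℝ) :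
    rf r s v (rf r s v x) = x := by
  rw [rf_apply, rf_apply, Brs_sub_right, Brs_smul_right]
  have key : 2 / Brs r s v v * (Brs r s v x - 2 / Brs r s v v * Brs r s v x * Brs r s v v) =
      -(2 / Brs r s v v * Brs r s v x) := by
    field_simp
    ring
  rw [key]
  module

lemma rf_smul {v : Fin (r+s) → ℝ} {c : ℝ} (hc : c ≠ 0) (x : Fin (r+s) → ℝ) :
    rf r s (c • v) x = rf r s v x := by
  rw [rf_apply, rf_apply, Brs_smul_left, Brs_smul_left, Brs_smul_right]
  rcases eq_or_ne (Brs r s v v) 0 with h0 | h0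
  · rw [h0]; simp
  · rw [smul_smul]
    have key : 2 / (c * (c * Brs r s v v)) * (c * Brs r s v x) * c =
        2 / Brs r s v v * Brs r s v x := by
      field_simp
    rw [key]

/-- Composite of reflections along a list (first element applied last). -/
def rlist : List (Fin (r+s) → ℝ) → (Fin (r+s) → ℝ) → (Fin (r+s) → ℝ)
  | [], x => x
  | v :: t, x => rf r s v (rlist t x)

lemma rlist_nil (x : Fin (r+s) → ℝ) : rlist r s [] x = x := rfl
lemma rlist_cons (v : Fin (r+s) → ℝ) (t : List _) (x) :
    rlist r s (v :: t) x = rf r s v (rlist r s t x) := rfl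

lemma rlist_append (l m : List (Fin (r+s) → ℝ)) (x) :
    rlist r s (l ++ m) x = rlist r s l (rlist r s m x) := by
  induction l with
  | nil => rfl
  | cons v t ih => simp [rlist_cons, ih]

lemma rlist_add (l : List (Fin (r+s) → ℝ)) (x y) :
    rlist r s l (x + y) = rlist r s l x + rlist r s l y := by
  induction l with
  | nil => rfl
  | cons v t ih => simp [rlist_cons, ih, map_add]

lemma rlist_smul (l : List (Fin (r+s) → ℝ)) (c : ℝ) (x) :
    rlist r s l (c • x) = c • rlist r s l x := by
  induction l with
  | nil => rfl
  | cons v t ih => simp [rlist_cons, ih, map_smul]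

lemma rlist_fix (l : List (Fin (r+s) → ℝ)) (v : Fin (r+s) → ℝ)
    (h : ∀ u ∈ l, Brs r s u v = 0) : rlist r s l v = v := by
  induction l with
  | nil => rfl
  | cons u t ih =>
    rw [rlist_cons, ih fun w hw => h w (List.mem_cons_of_mem _ hw),
      rf_fix r s (h u (List.mem_cons_self))]

lemma rlist_isometry (l : List (Fin (r+s) → ℝ)) (h : ∀ v ∈ l, Brs r s v v ≠ 0) (x y) :
    Brs r s (rlist r s l x) (rlist r s l y) = Brs r s x y := by
  induction l with
  | nil => rfl
  | cons v t ih =>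
    rw [rlist_cons, rlist_cons, rf_isometry r s (h v (List.mem_cons_self)),
      ih fun w hw => h w (List.mem_cons_of_mem _ hw)]


lemma exists_aniso (W : Submodule ℝ (Fin (r+s) → ℝ))
    (hnd : ∀ x ∈ W, (∀ y ∈ W, Brs r s x y = 0) → x = 0) (hW : W ≠ ⊥) :
    ∃ v ∈ W, Brs r s v v ≠ 0 := by
  by_contra hcon
  push_neg at hcon
  obtain ⟨x, hxW, hx0⟩ := Submodule.exists_mem_ne_zero_of_ne_bot hW
  refine hx0 (hnd x hxW fun y hy => ?_)
  have h1 := hcon (x + y) (W.add_mem hxW hy)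
  rw [Brs_add_left, Brs_add_right, Brs_add_right, hcon x hxW, hcon y hy,
    Brs_symm r s y x] at h1
  linarith

lemma Brs_neg_left (x v : Fin (r+s) → ℝ) : Brs r s (-x) v = - Brs r s x v := by
  rw [Brs_symm, Brs_neg_right, Brs_symm]

lemma Brs_sub_left (x y v : Fin (r+s) → ℝ) :
    Brs r s (x - y) v = Brs r s x v - Brs r s y v := by
  rw [sub_eq_add_neg, Brs_add_left, Brs_neg_left]; ring

lemma Brs_expand (a b : Fin (r+s) → ℝ) :
    Brs r s (a + b) (a + b) = Brs r s a a + 2 * Brs r s a b + Brs r s b b := by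
  rw [Brs_add_left, Brs_add_right, Brs_add_right, Brs_symm r s b a]; ring

lemma Brs_expand_sub (a b : Fin (r+s) → ℝ) :
    Brs r s (a - b) (a - b) = Brs r s a a - 2 * Brs r s a b + Brs r s b b := by
  rw [sub_eq_add_neg, Brs_expand, Brs_neg_right, Brs_neg_left, Brs_neg_right]; ring

/-- Cartan–Dieudonné, by induction on the rank of the invariant subspace. -/
lemma cartan_dieudonne : ∀ (k : ℕ) (W : Submodule ℝ (Fin (r+s) → ℝ)),
    Module.finrank ℝ W ≤ k →
    (∀ x ∈ W, (∀ y ∈ W, Brs r s x y = 0) → x = 0) →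
    ∀ C : (Fin (r+s) → ℝ) →ₗ[ℝ] (Fin (r+s) → ℝ),
    (∀ x ∈ W, C x ∈ W) →
    (∀ x ∈ W, ∀ y ∈ W, Brs r s (C x) (C y) = Brs r s x y) →
    ∃ l : List (Fin (r+s) → ℝ), (∀ v ∈ l, v ∈ W ∧ Brs r s v v ≠ 0) ∧
      ∀ x ∈ W, C x = rlist r s l x := by
  intro k
  induction k with
  | zero =>
    intro W hrk _ C _ _
    refine ⟨[], by simp, fun x hx => ?_⟩
    have hbot : W = ⊥ := by
      rw [← Submodule.finrank_eq_zero (R := ℝ) (M := Fin (r+s) → ℝ)]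
      omega
    rw [hbot, Submodule.mem_bot] at hx
    rw [hx, map_zero, rlist_nil]
  | succ k IH =>
    intro W hrk hnd C hCW hCiso
    rcases eq_or_ne W ⊥ with hbot | hbot
    · refine ⟨[], by simp, fun x hx => ?_⟩
      rw [hbot, Submodule.mem_bot] at hx
      rw [hx, map_zero, rlist_nil]
    obtain ⟨v, hvW, hv⟩ := exists_aniso r s W hnd hbot
    obtain ⟨pre, D, hpre, hCD, hDv, hDW, hDiso⟩ :
        ∃ (pre : List (Fin (r+s) → ℝ)) (D : (Fin (r+s) → ℝ) →ₗ[ℝ] (Fin (r+s) → ℝ)),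
          (∀ p ∈ pre, p ∈ W ∧ Brs r s p p ≠ 0) ∧
          (∀ x ∈ W, C x = rlist r s pre (D x)) ∧
          D v = v ∧ (∀ x ∈ W, D x ∈ W) ∧
          (∀ x ∈ W, ∀ y ∈ W, Brs r s (D x) (D y) = Brs r s x y) := by
      have hBcc : Brs r s (C v) (C v) = Brs r s v v := hCiso v hvW v hvW
      have hkey : Brs r s (C v - v) (C v - v) + Brs r s (C v + v) (C v + v)
          = 4 * Brs r s v v := by
        rw [Brs_expand_sub, Brs_expand, hBcc]; ring
      rcases eq_or_ne (Brs r s (C v - v) (C v - v)) 0 with hu0 | hu0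
      · -- `C v + v` is anisotropic; D = rf v ∘ rf (C v + v) ∘ C
        have hu : Brs r s (C v + v) (C v + v) ≠ 0 := fun h0 => by
          rw [hu0, h0] at hkey; exact hv (by linarith)
        have huc : Brs r s (C v + v) (C v + v) = 2 * Brs r s (C v + v) (C v) := by
          rw [Brs_expand, Brs_add_left, hBcc, Brs_symm r s v (C v)]; ring
        have hX : Brs r s (C v + v) (C v) ≠ 0 := fun h0 => hu (by rw [huc, h0]; ring)
        have hco : 2 / Brs r s (C v + v) (C v + v) * Brs r s (C v + v) (C v) = 1 := by
          rw [huc]; field_simp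
        have hrfu : rf r s (C v + v) (C v) = - v := by
          rw [rf_apply, hco, one_smul]; abel
        refine ⟨[C v + v, v], (rf r s v).comp ((rf r s (C v + v)).comp C), ?_, ?_, ?_, ?_, ?_⟩
        · rintro p hp
          simp only [List.mem_cons, List.not_mem_nil, or_false] at hp
          rcases hp with rfl | rfl
          exacts [⟨W.add_mem (hCW v hvW) hvW, hu⟩, ⟨hvW, hv⟩]
        · intro x _
          simp only [LinearMap.comp_apply, rlist_cons, rlist_nil]
          rw [rf_invol r s hv, rf_invol r s hu]
        · simp only [LinearMap.comp_apply, hrfu, map_neg, rf_self r s hv, neg_neg]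
        · intro x hx
          have h1 : rf r s (C v + v) (C x) ∈ W := by
            rw [rf_apply]
            exact W.sub_mem (hCW x hx) (Submodule.smul_mem _ _ (W.add_mem (hCW v hvW) hvW))
          rw [LinearMap.comp_apply, LinearMap.comp_apply, rf_apply]
          exact W.sub_mem h1 (Submodule.smul_mem _ _ hvW)
        · intro x hx y hy
          simp only [LinearMap.comp_apply]
          rw [rf_isometry r s hv, rf_isometry r s hu]
          exact hCiso x hx y hy
      · -- `C v - v` is anisotropic; D = rf (C v - v) ∘ C
        have hsl : Brs r s (C v - v) (C v) = Brs r s (C v) (C v) - Brs r s v (C v) :=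
          Brs_sub_left r s _ _ _
        have huc : Brs r s (C v - v) (C v - v) = 2 * Brs r s (C v - v) (C v) := by
          rw [Brs_expand_sub, hsl, hBcc, Brs_symm r s v (C v)]; ring
        have hX : Brs r s (C v - v) (C v) ≠ 0 := fun h0 => hu0 (by rw [huc, h0]; ring)
        have hco : 2 / Brs r s (C v - v) (C v - v) * Brs r s (C v - v) (C v) = 1 := by
          rw [huc]; field_simp
        have hrfu : rf r s (C v - v) (C v) = v := by
          rw [rf_apply, hco, one_smul]; abel
        refine ⟨[C v - v], (rf r s (C v - v)).comp C, ?_, ?_, ?_, ?_, ?_⟩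
        · rintro p hp
          simp only [List.mem_cons, List.not_mem_nil, or_false] at hp
          rcases hp with rfl
          exact ⟨W.sub_mem (hCW v hvW) hvW, hu0⟩
        · intro x _
          simp only [LinearMap.comp_apply, rlist_cons, rlist_nil]
          rw [rf_invol r s hu0]
        · simp only [LinearMap.comp_apply, hrfu]
        · intro x hx
          rw [LinearMap.comp_apply, rf_apply]
          exact W.sub_mem (hCW x hx) (Submodule.smul_mem _ _ (W.sub_mem (hCW v hvW) hvW))
        · intro x hx y hy
          simp only [LinearMap.comp_apply]
          rw [rf_isometry r s hu0]
          exact hCiso x hx y hy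
    -- the orthogonal complement of `v` inside `W`
    set W' : Submodule ℝ (Fin (r+s) → ℝ) := W ⊓ LinearMap.ker (Bl r s v) with hW'
    have hmemW' : ∀ x, x ∈ W' ↔ x ∈ W ∧ Brs r s v x = 0 := by
      intro x
      simp [hW', LinearMap.mem_ker]
    have hW'le : W' ≤ W := inf_le_left
    have hvnW' : v ∉ W' := fun h => hv ((hmemW' v).1 h).2
    have hlt : W' < W := lt_of_le_of_ne hW'le (fun h => hvnW' (h ▸ hvW))
    have hrk' : Module.finrank ℝ W' ≤ k := by
      have := Submodule.finrank_lt_finrank_of_lt hlt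
      omega
    -- decomposition of elements of W
    have hdec : ∀ x ∈ W, x - (Brs r s v x / Brs r s v v) • v ∈ W' := by
      intro x hx
      rw [hmemW']
      constructor
      · exact W.sub_mem hx (Submodule.smul_mem _ _ hvW)
      · rw [Brs_sub_right, Brs_smul_right]
        field_simp
        ring
    have hnd' : ∀ x ∈ W', (∀ y ∈ W', Brs r s x y = 0) → x = 0 := by
      intro x hxW' hxo
      have hxW := hW'le hxW'
      have hvx : Brs r s v x = 0 := ((hmemW' x).1 hxW').2
      refine hnd x hxW fun y hy => ?_
      have h1 : Brs r s x (y - (Brs r s v y / Brs r s v v) • v) = 0 :=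
        hxo _ (hdec y hy)
      rw [Brs_sub_right, Brs_smul_right] at h1
      have h2 : Brs r s x v = 0 := by rw [Brs_symm]; exact hvx
      rw [h2] at h1
      linarith [h1]
    have hDW' : ∀ x ∈ W', D x ∈ W' := by
      intro x hx
      rw [hmemW']
      refine ⟨hDW x (hW'le hx), ?_⟩
      have : Brs r s (D v) (D x) = Brs r s v x := hDiso v hvW x (hW'le hx)
      rw [hDv] at this
      rw [this]
      exact ((hmemW' x).1 hx).2
    obtain ⟨l', hl'mem, hl'⟩ := IH W' hrk' hnd' D hDW'
      (fun x hx y hy => hDiso x (hW'le hx) y (hW'le hy))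
    -- D agrees with rlist l' on all of W
    have hDW_eq : ∀ x ∈ W, D x = rlist r s l' x := by
      intro x hx
      have hfix : rlist r s l' v = v := by
        refine rlist_fix r s l' v fun u hu => ?_
        have := ((hmemW' u).1 (hl'mem u hu).1).2
        rw [Brs_symm]; exact this
      have hxd := hdec x hx
      have hxeq : x = (Brs r s v x / Brs r s v v) • v + (x - (Brs r s v x / Brs r s v v) • v) := by
        abel
      calc D x = D ((Brs r s v x / Brs r s v v) • v + (x - (Brs r s v x / Brs r s v v) • v)) := by
            rw [← hxeq]
        _ = (Brs r s v x / Brs r s v v) • D v + D (x - (Brs r s v x / Brs r s v v) • v) := by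
            rw [map_add, map_smul]
        _ = (Brs r s v x / Brs r s v v) • v + rlist r s l' (x - (Brs r s v x / Brs r s v v) • v) := by
            rw [hDv, hl' _ hxd]
        _ = rlist r s l' ((Brs r s v x / Brs r s v v) • v) + rlist r s l' (x - (Brs r s v x / Brs r s v v) • v) := by
            rw [rlist_smul, hfix]
        _ = rlist r s l' x := by rw [← rlist_add, ← hxeq]
    refine ⟨pre ++ l', ?_, ?_⟩
    · intro w hw
      rcases List.mem_append.1 hw with h | h
      · exact hpre w h
      · exact ⟨hW'le (hl'mem w h).1, (hl'mem w h).2⟩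
    · intro x hx
      rw [rlist_append, ← hDW_eq x hx, hCD x hx]

/-- normalized vector: same reflection, unit "norm". -/
def nrm (v : Fin (r+s) → ℝ) : Fin (r+s) → ℝ := (Real.sqrt |Brs r s v v|)⁻¹ • v

lemma nrm_spec {v : Fin (r+s) → ℝ} (hv : Brs r s v v ≠ 0) :
    (Brs r s (nrm r s v) (nrm r s v) = 1 ∨ Brs r s (nrm r s v) (nrm r s v) = -1) ∧
      ∀ x, rf r s (nrm r s v) x = rf r s v x := by
  have ht : 0 < Real.sqrt |Brs r s v v| := Real.sqrt_pos.2 (abs_pos.2 hv)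
  set t := Real.sqrt |Brs r s v v| with htdef
  have ht2 : t * t = |Brs r s v v| := Real.mul_self_sqrt (abs_nonneg _)
  constructor
  · have hB : Brs r s (nrm r s v) (nrm r s v) = t⁻¹ * (t⁻¹ * Brs r s v v) := by
      rw [nrm, Brs_smul_left, Brs_smul_right]
    rcases lt_or_gt_of_ne hv with hneg | hpos
    · right
      rw [hB, show Brs r s v v = -(t*t) by rw [ht2, abs_of_neg hneg]; ring]
      field_simp
    · left
      rw [hB, show Brs r s v v = t*t by rw [ht2, abs_of_pos hpos]]
      field_simp
  · exact fun x => rf_smul r s (inv_ne_zero ht.ne') x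

lemma cd_norm (C : (Fin (r+s) → ℝ) →ₗ[ℝ] (Fin (r+s) → ℝ))
    (hC : ∀ x y, Brs r s (C x) (C y) = Brs r s x y) :
    ∃ l : List (Fin (r+s) → ℝ),
      (∀ v ∈ l, Brs r s v v = 1 ∨ Brs r s v v = -1) ∧ ∀ x, C x = rlist r s l x := by
  obtain ⟨l, hmem, hl⟩ := cartan_dieudonne r s (Module.finrank ℝ (Fin (r+s) → ℝ)) ⊤
    (le_of_eq (finrank_top ℝ _)) (fun x _ h => Brs_nondeg r s x fun y => h y trivial)
    C (fun x _ => trivial) (fun x _ y _ => hC x y)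
  refine ⟨l.map (nrm r s), ?_, ?_⟩
  · intro v hv
    obtain ⟨w, hwl, rfl⟩ := List.mem_map.1 hv
    exact (nrm_spec r s (hmem w hwl).2).1
  · intro x
    rw [hl x trivial]
    clear hl
    induction l with
    | nil => rfl
    | cons w tl ih =>
      have hmem' : ∀ v ∈ tl, v ∈ (⊤ : Submodule ℝ (Fin (r+s) → ℝ)) ∧ Brs r s v v ≠ 0 :=
        fun v hv => hmem v (List.mem_cons_of_mem _ hv)
      simp only [List.map_cons, rlist_cons, ih hmem']
      rw [(nrm_spec r s (hmem w (List.mem_cons_self)).2).2]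


open CliffordAlgebra in
/-- Product of the vectors of `l` in the Clifford algebra. -/
def Pl (l : List (Fin (r+s) → ℝ)) : CliffordAlgebra (Qrs r s) :=
  (l.map (CliffordAlgebra.ι (Qrs r s))).prod

open CliffordAlgebra in
/-- Inverse of `Pl l` for unit-norm vectors. -/
def Pinv : List (Fin (r+s) → ℝ) → CliffordAlgebra (Qrs r s)
  | [] => 1
  | v :: t => Pinv t * CliffordAlgebra.ι (Qrs r s) ((-(Brs r s v v)) • v)

open CliffordAlgebra

lemma Pl_nil : Pl r s [] = 1 := rfl
lemma Pl_cons (v) (t) : Pl r s (v :: t) = ι (Qrs r s) v * Pl r s t := by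
  simp [Pl]

lemma iota_mul_iota_inv {v : Fin (r+s) → ℝ} (hv : Brs r s v v = 1 ∨ Brs r s v v = -1) :
    ι (Qrs r s) v * ι (Qrs r s) ((-(Brs r s v v)) • v) = 1 := by
  rw [map_smul, mul_smul_comm, ι_sq_scalar, Qrs_eq]
  rw [Algebra.smul_def, ← map_mul]
  rw [show -Brs r s v v * -Brs r s v v = 1 by rcases hv with h | h <;> rw [h] <;> norm_num]
  exact map_one _

lemma iota_inv_mul_iota {v : Fin (r+s) → ℝ} (hv : Brs r s v v = 1 ∨ Brs r s v v = -1) :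
    ι (Qrs r s) ((-(Brs r s v v)) • v) * ι (Qrs r s) v = 1 := by
  rw [map_smul, smul_mul_assoc, ι_sq_scalar, Qrs_eq]
  rw [Algebra.smul_def, ← map_mul]
  rw [show -Brs r s v v * -Brs r s v v = 1 by rcases hv with h | h <;> rw [h] <;> norm_num]
  exact map_one _

lemma Pl_mul_Pinv : ∀ l : List (Fin (r+s) → ℝ),
    (∀ v ∈ l, Brs r s v v = 1 ∨ Brs r s v v = -1) →
    Pl r s l * Pinv r s l = 1 ∧ Pinv r s l * Pl r s l = 1 := by
  intro l
  induction l with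
  | nil => intro _; constructor <;> simp [Pl_nil, Pinv]
  | cons v t ih =>
    intro hl
    have hv := hl v (List.mem_cons_self)
    have ht := ih fun w hw => hl w (List.mem_cons_of_mem _ hw)
    constructor
    · rw [Pl_cons, Pinv, show ι (Qrs r s) v * Pl r s t * (Pinv r s t * ι (Qrs r s) ((-(Brs r s v v)) • v)) = ι (Qrs r s) v * (Pl r s t * Pinv r s t) * ι (Qrs r s) ((-(Brs r s v v)) • v) by noncomm_ring, ht.1, mul_one, iota_mul_iota_inv r s hv]
    · rw [Pl_cons, Pinv, show Pinv r s t * ι (Qrs r s) ((-(Brs r s v v)) • v) * (ι (Qrs r s) v * Pl r s t) = Pinv r s t * (ι (Qrs r s) ((-(Brs r s v v)) • v) * ι (Qrs r s) v) * Pl r s t by noncomm_ring, iota_inv_mul_iota r s hv, mul_one, ht.2]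

lemma conj_Pl : ∀ l : List (Fin (r+s) → ℝ),
    (∀ v ∈ l, Brs r s v v = 1 ∨ Brs r s v v = -1) → ∀ w,
    involute (Pl r s l) * ι (Qrs r s) w * Pinv r s l = ι (Qrs r s) (rlist r s l w) := by
  intro l
  induction l with
  | nil => intro _ w; simp [Pl_nil, Pinv, rlist_nil]
  | cons v t ih =>
    intro hl w
    have hv := hl v (List.mem_cons_self)
    have ht := ih fun u hu => hl u (List.mem_cons_of_mem _ hu)
    have hvne : Brs r s v v ≠ 0 := by rcases hv with h | h <;> rw [h] <;> norm_num
    rw [Pl_cons, Pinv, map_mul, involute_ι]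
    set y := rlist r s t w with hy
    have assoc1 : -ι (Qrs r s) v * involute (Pl r s t) * ι (Qrs r s) w *
        (Pinv r s t * ι (Qrs r s) ((-(Brs r s v v)) • v)) =
        -(ι (Qrs r s) v * (involute (Pl r s t) * ι (Qrs r s) w * Pinv r s t) *
          ι (Qrs r s) ((-(Brs r s v v)) • v)) := by noncomm_ring
    rw [assoc1, ht w, ← hy]
    rw [map_smul, mul_smul_comm, ← neg_smul, neg_neg]
    rw [ι_mul_ι_mul_ι]
    rw [← map_smul, smul_sub, smul_smul, smul_smul]
    rw [polar_Qrs, Qrs_eq]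
    rw [rlist_cons, ← hy, rf_apply]
    congr 1
    have h3 : Brs r s v v * -Brs r s v v = -1 := by
      rcases hv with h | h <;> rw [h] <;> norm_num
    rw [h3, neg_one_smul]
    rw [show Brs r s v v * (-2 * Brs r s v y) = -(2 / Brs r s v v * Brs r s v y) from by
      rcases hv with h | h <;> rw [h] <;> field_simp <;> ring]
    module

lemma rev_Pl : ∀ l : List (Fin (r+s) → ℝ),
    (∀ v ∈ l, Brs r s v v = 1 ∨ Brs r s v v = -1) →
    ∃ q : ℝ, (q = 1 ∨ q = -1) ∧
      reverse (Pl r s l) * Pl r s l = algebraMap ℝ (CliffordAlgebra (Qrs r s)) q := by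
  intro l
  induction l with
  | nil => exact fun _ => ⟨1, Or.inl rfl, by simp [Pl_nil]⟩
  | cons v t ih =>
    intro hl
    have hv := hl v (List.mem_cons_self)
    obtain ⟨q, hq, hqe⟩ := ih fun u hu => hl u (List.mem_cons_of_mem _ hu)
    refine ⟨-(Brs r s v v) * q, by rcases hv with h | h <;> rcases hq with h' | h' <;>
      rw [h, h'] <;> norm_num, ?_⟩
    rw [Pl_cons, reverse.map_mul, reverse_ι]
    have assoc1 : reverse (Pl r s t) * ι (Qrs r s) v * (ι (Qrs r s) v * Pl r s t) =
        reverse (Pl r s t) * (ι (Qrs r s) v * ι (Qrs r s) v) * Pl r s t := by noncomm_ring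
    rw [assoc1, ι_sq_scalar, Qrs_eq]
    rw [← Algebra.commutes, mul_assoc, hqe, ← map_mul]

lemma unit_coe_inv_eq {u : (CliffordAlgebra (Qrs r s))ˣ} {l : List (Fin (r+s) → ℝ)}
    (hl : ∀ v ∈ l, Brs r s v v = 1 ∨ Brs r s v v = -1)
    (h : (u : CliffordAlgebra (Qrs r s)) = Pl r s l) :
    ((u⁻¹ : (CliffordAlgebra (Qrs r s))ˣ) : CliffordAlgebra (Qrs r s)) = Pinv r s l := by
  calc (↑u⁻¹ : CliffordAlgebra (Qrs r s)) = ↑u⁻¹ * (Pl r s l * Pinv r s l) := by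
        rw [(Pl_mul_Pinv r s l hl).1, mul_one]
    _ = (↑u⁻¹ * ↑u) * Pinv r s l := by rw [h, mul_assoc]
    _ = Pinv r s l := by rw [u.inv_mul, one_mul]


lemma cL_leibniz (d : Module.Dual ℝ (Fin (r+s) → ℝ)) :
    ∀ a b : CliffordAlgebra (Qrs r s),
      contractLeft d (a * b) = contractLeft d a * b + involute a * contractLeft d b := by
  intro a
  induction a using CliffordAlgebra.induction with
  | algebraMap rr =>
    intro b
    rw [show (algebraMap ℝ (CliffordAlgebra (Qrs r s))) rr * b = rr • b from
      (Algebra.smul_def rr b).symm, map_smul, contractLeft_algebraMap, zero_mul,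
      involute.commutes, Algebra.smul_def, zero_add]
  | ι x =>
    intro b
    rw [contractLeft_ι_mul, contractLeft_ι, involute_ι, Algebra.smul_def, neg_mul, sub_eq_add_neg]
  | mul a b ha hb =>
    intro c
    rw [mul_assoc, ha (b * c), hb c, ha b, map_mul]
    noncomm_ring
  | add a b ha hb =>
    intro c
    rw [add_mul, map_add, ha c, hb c, map_add, map_add, add_mul]
    noncomm_ring

lemma iota_comm_sub (v : Fin (r+s) → ℝ) :
    ∀ x : CliffordAlgebra (Qrs r s),
      ι (Qrs r s) v * x - involute x * ι (Qrs r s) v =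
        contractLeft (QuadraticMap.polarBilin (Qrs r s) v) x := by
  intro x
  induction x using CliffordAlgebra.induction with
  | algebraMap rr =>
    rw [involute.commutes, contractLeft_algebraMap, Algebra.commutes, sub_self]
  | ι w =>
    rw [involute_ι, contractLeft_ι, neg_mul, sub_neg_eq_add, ι_mul_ι_add_swap]
    rfl
  | mul a b ha hb =>
    rw [cL_leibniz, ← ha, ← hb, map_mul]
    noncomm_ring
  | add a b ha hb =>
    rw [map_add, map_add, ← ha, ← hb]
    noncomm_ring

lemma amap_inj : Function.Injective (algebraMap ℝ (CliffordAlgebra (Qrs r s))) := by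
  letI : Invertible (2:ℝ) := invertibleOfNonzero two_ne_zero
  exact (algebraMap ℝ (CliffordAlgebra (Qrs r s))).injective


/-- basis vectors of the Clifford algebra -/
def eps (i : Fin (r+s)) : CliffordAlgebra (Qrs r s) := ι (Qrs r s) (Pi.single i 1)

/-- ordered products of basis vectors -/
def EL (l : List (Fin (r+s))) : CliffordAlgebra (Qrs r s) := (l.map (eps r s)).prod

lemma EL_nil : EL r s [] = 1 := rfl
lemma EL_cons (j) (t) : EL r s (j :: t) = eps r s j * EL r s t := by simp [EL]

lemma Brs_single_single {i j : Fin (r+s)} (h : i ≠ j) :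
    Brs r s (Pi.single i 1) (Pi.single j 1) = 0 := by
  rw [Brs_single, Pi.single_eq_of_ne (Ne.symm h), mul_zero]

lemma polar_single {i j : Fin (r+s)} (h : i ≠ j) :
    QuadraticMap.polar (Qrs r s) (Pi.single i 1) (Pi.single j 1) = 0 := by
  rw [polar_Qrs, Brs_single_single r s h, mul_zero]

lemma eps_sq (i : Fin (r+s)) :
    eps r s i * eps r s i = algebraMap ℝ _ (Qrs r s (Pi.single i 1)) := ι_sq_scalar _ _

lemma Qrs_single_ne (i : Fin (r+s)) : Qrs r s (Pi.single i 1) ≠ 0 := by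
  rw [Qrs_eq, Brs_single, Pi.single_eq_same]
  split <;> norm_num

lemma eps_mul_eps_comm {i j : Fin (r+s)} (h : i ≠ j) :
    eps r s i * eps r s j = -(eps r s j * eps r s i) := by
  rw [eps, eps, ι_mul_ι_comm, polar_single r s h, map_zero, zero_sub]

lemma eps_mul_EL : ∀ l : List (Fin (r+s)), l.Pairwise (· < ·) → ∀ i,
    ∃ (a : ℝ) (m : List (Fin (r+s))), m.Pairwise (· < ·) ∧ (∀ j ∈ m, j = i ∨ j ∈ l) ∧
      eps r s i * EL r s l = a • EL r s m := by
  intro l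
  induction l with
  | nil =>
    intro _ i
    exact ⟨1, [i], List.pairwise_singleton _ i, by simp, by simp [EL_nil, EL_cons, EL]⟩
  | cons j t ih =>
    intro hs i
    have hjt : ∀ b ∈ t, j < b := (List.pairwise_cons.1 hs).1
    have ht : t.Pairwise (· < ·) := (List.pairwise_cons.1 hs).2
    rcases lt_trichotomy i j with hij | rfl | hij
    · refine ⟨1, i :: j :: t, ?_, ?_, by rw [one_smul]; simp only [EL, List.map_cons, List.prod_cons]⟩
      · exact List.pairwise_cons.2 ⟨fun b hb => by
          rcases List.mem_cons.1 hb with rfl | hb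
          exacts [hij, lt_trans hij (hjt b hb)], hs⟩
      · intro a ha
        rcases List.mem_cons.1 ha with rfl | ha
        exacts [Or.inl rfl, Or.inr ha]
    · refine ⟨Qrs r s (Pi.single i 1), t, ht, fun a ha => Or.inr (List.mem_cons_of_mem _ ha), ?_⟩
      rw [EL_cons, ← mul_assoc, eps_sq, Algebra.smul_def]
    · obtain ⟨a, m, hm, hmem, hmul⟩ := ih ht i
      have hij' : i ≠ j := Ne.symm (ne_of_lt hij)
      refine ⟨-a, j :: m, ?_, ?_, ?_⟩
      · exact List.pairwise_cons.2 ⟨fun b hb => by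
          rcases hmem b hb with rfl | hb
          exacts [hij, hjt b hb], hm⟩
      · intro b hb
        rcases List.mem_cons.1 hb with rfl | hb
        · exact Or.inr (List.mem_cons_self)
        · rcases hmem b hb with rfl | hb
          exacts [Or.inl rfl, Or.inr (List.mem_cons_of_mem _ hb)]
      · rw [EL_cons, ← mul_assoc, eps_mul_eps_comm r s hij', neg_mul, mul_assoc, hmul,
          EL_cons, mul_smul_comm, neg_smul]

/-- index type: sorted lists -/
def SL := {l : List (Fin (r+s)) // l.Pairwise (· < ·)}

/-- the span of the ordered products -/
def Msp : Submodule ℝ (CliffordAlgebra (Qrs r s)) :=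
  Submodule.span ℝ (Set.range (fun l : SL r s => EL r s l.val))

lemma EL_mem_Msp {m : List (Fin (r+s))} (hm : m.Pairwise (· < ·)) : EL r s m ∈ Msp r s :=
  Submodule.subset_span ⟨⟨m, hm⟩, rfl⟩

lemma eps_mul_mem {i : Fin (r+s)} {z : CliffordAlgebra (Qrs r s)} (hz : z ∈ Msp r s) :
    eps r s i * z ∈ Msp r s := by
  induction hz using Submodule.span_induction with
  | mem x hx =>
    obtain ⟨l, rfl⟩ := hx
    obtain ⟨a, m, hm, _, hmul⟩ := eps_mul_EL r s l.val l.property i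
    rw [hmul]
    exact Submodule.smul_mem _ _ (EL_mem_Msp r s hm)
  | zero => rw [mul_zero]; exact Submodule.zero_mem _
  | add x y _ _ hx hy => rw [mul_add]; exact Submodule.add_mem _ hx hy
  | smul c x _ hx => rw [mul_smul_comm]; exact Submodule.smul_mem _ _ hx

lemma EL_mul_mem (l : List (Fin (r+s))) {z : CliffordAlgebra (Qrs r s)} (hz : z ∈ Msp r s) :
    EL r s l * z ∈ Msp r s := by
  induction l with
  | nil => rw [EL_nil, one_mul]; exact hz
  | cons j t ih => rw [EL_cons, mul_assoc]; exact eps_mul_mem r s ih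

lemma Msp_top (x : CliffordAlgebra (Qrs r s)) : x ∈ Msp r s := by
  induction x using CliffordAlgebra.induction with
  | algebraMap rr =>
    rw [Algebra.algebraMap_eq_smul_one]
    exact Submodule.smul_mem _ _ (EL_mem_Msp r s (List.Pairwise.nil))
  | ι v =>
    have hv : v = ∑ i : Fin (r+s), v i • (Pi.single i 1 : Fin (r+s) → ℝ) := by
      funext j
      rw [Finset.sum_apply]
      simp only [Pi.smul_apply, Pi.single_apply, smul_eq_mul, mul_ite, mul_one, mul_zero,
        Finset.sum_ite_eq, Finset.mem_univ, if_true]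
    rw [hv, map_sum]
    refine Submodule.sum_mem _ fun i _ => ?_
    rw [map_smul]
    refine Submodule.smul_mem _ _ ?_
    have : ι (Qrs r s) (Pi.single i 1) = EL r s [i] := by simp [EL_cons, EL_nil, eps]
    rw [this]
    exact EL_mem_Msp r s (List.pairwise_singleton _ i)
  | mul a b ha hb =>
    induction ha using Submodule.span_induction with
    | mem x hx =>
      obtain ⟨l, rfl⟩ := hx
      exact EL_mul_mem r s l.val hb
    | zero => rw [zero_mul]; exact Submodule.zero_mem _
    | add x y _ _ hx hy => rw [add_mul]; exact Submodule.add_mem _ hx hy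
    | smul c x _ hx => rw [smul_mul_assoc]; exact Submodule.smul_mem _ _ hx
  | add a b ha hb => exact Submodule.add_mem _ ha hb

/-- coordinate projections as duals -/
def dproj (i : Fin (r+s)) : Module.Dual ℝ (Fin (r+s) → ℝ) := LinearMap.proj i

lemma cL_EL_not_mem : ∀ (l : List (Fin (r+s))) (i : Fin (r+s)), i ∉ l →
    contractLeft (dproj r s i) (EL r s l) = 0 := by
  intro l
  induction l with
  | nil => intro i _; rw [EL_nil]; exact contractLeft_one _ _
  | cons j t ih =>
    intro i hi
    have hij : i ≠ j := fun h => hi (h ▸ List.mem_cons_self)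
    have hit : i ∉ t := fun h => hi (List.mem_cons_of_mem _ h)
    rw [EL_cons, eps, contractLeft_ι_mul, ih i hit, mul_zero, sub_zero,
      show dproj r s i (Pi.single j 1) = 0 from by
        simp [dproj, Pi.single_apply, Ne.symm hij], zero_smul]

lemma cL_EL_mem : ∀ (l : List (Fin (r+s))), l.Pairwise (· < ·) → ∀ i ∈ l,
    ∃ a : ℝ, a ≠ 0 ∧ contractLeft (dproj r s i) (EL r s l) = a • EL r s (l.erase i) := by
  intro l
  induction l with
  | nil => intro _ i hi; exact absurd hi List.not_mem_nil
  | cons j t ih =>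
    intro hs i hi
    have hjt : ∀ b ∈ t, j < b := (List.pairwise_cons.1 hs).1
    have ht : t.Pairwise (· < ·) := (List.pairwise_cons.1 hs).2
    rcases List.mem_cons.1 hi with rfl | hit
    · have hnt : i ∉ t := fun h => lt_irrefl i (hjt i h)
      refine ⟨1, one_ne_zero, ?_⟩
      rw [EL_cons, eps, contractLeft_ι_mul, cL_EL_not_mem r s t i hnt, mul_zero, sub_zero,
        show dproj r s i (Pi.single i 1) = 1 from by simp [dproj],
        List.erase_cons_head, one_smul]
    · have hij : i ≠ j := fun h => lt_irrefl i (h ▸ hjt i hit)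
      obtain ⟨a, ha, hae⟩ := ih ht i hit
      refine ⟨-a, neg_ne_zero.2 ha, ?_⟩
      rw [EL_cons, eps, contractLeft_ι_mul, hae,
        show dproj r s i (Pi.single j 1) = 0 from by
          simp [dproj, Pi.single_apply, Ne.symm hij], zero_smul, zero_sub,
        List.erase_cons_tail, EL_cons, mul_smul_comm, ← neg_smul]
      · rfl
      · exact (by simpa using Ne.symm hij)

/-- iterated contraction -/
def Lam : List (Fin (r+s)) → CliffordAlgebra (Qrs r s) →ₗ[ℝ] CliffordAlgebra (Qrs r s)
  | [] => LinearMap.id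
  | i :: t => (Lam t).comp (contractLeft (dproj r s i))

lemma Lam_nil (x) : Lam r s [] x = x := rfl
lemma Lam_cons (i) (t) (x) : Lam r s (i :: t) x = Lam r s t (contractLeft (dproj r s i) x) := rfl

lemma Lam_EL_ne : ∀ (m l : List (Fin (r+s))), m.Pairwise (· < ·) → l.Pairwise (· < ·) →
    l.length ≤ m.length → l ≠ m → Lam r s m (EL r s l) = 0 := by
  haveI : IsAntisymm (Fin (r+s)) (· < ·) := ⟨fun a b h h' => absurd h (lt_asymm h')⟩
  intro m
  induction m with
  | nil =>
    intro l _ _ hlen hne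
    exact absurd (List.eq_nil_of_length_eq_zero (Nat.le_zero.1 hlen)) hne
  | cons i t ih =>
    intro l hm hl hlen hne
    have ht : t.Pairwise (· < ·) := (List.pairwise_cons.1 hm).2
    by_cases hil : i ∈ l
    · obtain ⟨a, _, hae⟩ := cL_EL_mem r s l hl i hil
      rw [Lam_cons, hae, map_smul]
      have hsort : (l.erase i).Pairwise (· < ·) := hl.sublist (l.erase_sublist (a := i))
      have hlen' : (l.erase i).length ≤ t.length := by
        rw [List.length_erase_of_mem hil]
        simp only [List.length_cons] at hlen
        omega
      have hne' : l.erase i ≠ t := by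
        intro h
        apply hne
        have hperm : List.Perm l (i :: t) := h ▸ List.perm_cons_erase hil
        exact hperm.eq_of_pairwise' hl hm
      rw [ih (l.erase i) ht hsort hlen' hne', smul_zero]
    · rw [Lam_cons, cL_EL_not_mem r s l i hil, map_zero]

lemma Lam_EL_self : ∀ m : List (Fin (r+s)), m.Pairwise (· < ·) →
    ∃ a : ℝ, a ≠ 0 ∧ Lam r s m (EL r s m) = algebraMap ℝ _ a := by
  intro m
  induction m with
  | nil => exact fun _ => ⟨1, one_ne_zero, by simp [Lam_nil, EL_nil]⟩
  | cons i t ih =>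
    intro hm
    have hit : i ∈ i :: t := List.mem_cons_self
    obtain ⟨a₁, ha₁, hae⟩ := cL_EL_mem r s (i :: t) hm i hit
    obtain ⟨a₂, ha₂, hbe⟩ := ih (List.pairwise_cons.1 hm).2
    refine ⟨a₁ * a₂, mul_ne_zero ha₁ ha₂, ?_⟩
    rw [Lam_cons, hae, List.erase_cons_head, map_smul, hbe, Algebra.smul_def, ← map_mul]


lemma extract : ∀ (k : ℕ) (c : SL r s →₀ ℝ),
    (∀ l ∈ c.support, (l : SL r s).val.length ≤ k) →
    (∀ i, contractLeft (dproj r s i) (c.sum fun l a => a • EL r s l.val) = 0) →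
    ∃ t : ℝ, (c.sum fun l a => a • EL r s l.val) = algebraMap ℝ _ t := by
  intro k
  induction k with
  | zero =>
    intro c hlen _
    refine ⟨∑ l ∈ c.support, c l, ?_⟩
    show ∑ l ∈ c.support, c l • EL r s l.val = _
    rw [Finset.sum_congr rfl (fun l hl => by
      rw [show (l : SL r s).val = [] from
        List.eq_nil_of_length_eq_zero (Nat.le_zero.1 (hlen l hl)), EL_nil]),
      ← Finset.sum_smul, ← Algebra.algebraMap_eq_smul_one]
  | succ k ih =>
    intro c hlen hc
    have hzero : ∀ l₀ ∈ c.support, (l₀ : SL r s).val.length = k + 1 → c l₀ = 0 := by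
      intro l₀ hl₀ hlen₀
      have hLx : Lam r s l₀.val (c.sum fun l a => a • EL r s l.val) = 0 := by
        obtain ⟨i, tl, hcons⟩ : ∃ i tl, l₀.val = i :: tl := by
          cases hval : l₀.val with
          | nil => rw [hval] at hlen₀; simp at hlen₀
          | cons i tl => exact ⟨i, tl, rfl⟩
        rw [hcons, Lam_cons, hc i, map_zero]
      obtain ⟨a, ha, hsa⟩ := Lam_EL_self r s l₀.val l₀.property
      have hsum : Lam r s l₀.val (c.sum fun l a => a • EL r s l.val) =
          algebraMap ℝ _ (c l₀ * a) := by
        rw [map_finsuppSum]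
        show ∑ l ∈ c.support, Lam r s l₀.val (c l • EL r s l.val) = _
        rw [Finset.sum_eq_single_of_mem l₀ hl₀ (fun b hb hbne => by
          rw [map_smul, Lam_EL_ne r s l₀.val b.val l₀.property b.property
            ((hlen b hb).trans_eq hlen₀.symm) (fun h => hbne (Subtype.ext h)), smul_zero])]
        rw [map_smul, hsa, Algebra.smul_def, ← map_mul]
      rw [hLx] at hsum
      have h0 : c l₀ * a = 0 := amap_inj r s (by rw [map_zero, ← hsum])
      exact (mul_eq_zero.1 h0).resolve_right ha
    refine ih c (fun l hl => ?_) hc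
    have h1 := hlen l hl
    by_contra h2
    have h3 : (l : SL r s).val.length = k + 1 := by omega
    exact Finsupp.mem_support_iff.1 hl (hzero l hl h3)

theorem central (x : CliffordAlgebra (Qrs r s))
    (hx : ∀ w, involute x * ι (Qrs r s) w = ι (Qrs r s) w * x) :
    ∃ t : ℝ, x = algebraMap ℝ _ t := by
  have hproj : ∀ i, contractLeft (dproj r s i) x = 0 := by
    intro i
    have h0 : contractLeft (QuadraticMap.polarBilin (Qrs r s) (Pi.single i 1)) x = 0 := by
      rw [← iota_comm_sub, hx, sub_self]
    have hrel : QuadraticMap.polarBilin (Qrs r s) (Pi.single i 1) =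
        (-2 * (if (i:ℕ) < r then (1:ℝ) else -1)) • dproj r s i := by
      apply LinearMap.ext; intro y
      rw [QuadraticMap.polarBilin_apply_apply, polar_Qrs, Brs_symm, Brs_single,
        LinearMap.smul_apply]
      simp only [dproj, LinearMap.proj_apply, smul_eq_mul]
      split <;> ring
    rw [hrel, map_smul, LinearMap.smul_apply] at h0
    have hne : (-2 * (if (i:ℕ) < r then (1:ℝ) else -1)) ≠ 0 := by split <;> norm_num
    exact (smul_eq_zero.1 h0).resolve_left hne
  obtain ⟨c, hc⟩ := Finsupp.mem_span_range_iff_exists_finsupp.1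
    (show x ∈ Msp r s from Msp_top r s x)
  have hbound : ∀ l ∈ c.support, (l : SL r s).val.length ≤ r + s := by
    intro l _
    have hnd : l.val.Nodup := List.Pairwise.imp ne_of_lt l.property
    simpa using hnd.length_le_card
  obtain ⟨t, ht⟩ := extract r s (r+s) c hbound (fun i => by rw [hc]; exact hproj i)
  exact ⟨t, by rw [← hc, ht]⟩

lemma aniso_of_pm {v : Fin (r+s) → ℝ} (h : Brs r s v v = 1 ∨ Brs r s v v = -1) :
    Brs r s v v ≠ 0 := by rcases h with h | h <;> rw [h] <;> norm_num

end S4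

open S4 CliffordAlgebra in
private theorem stmt4_aux (r s : ℕ) :
    (∀ u : (CliffordAlgebra (Qrs r s))ˣ, IsPin r s (u : CliffordAlgebra (Qrs r s)) →
      ∀ w : Fin (r + s) → ℝ, ∃ w' : Fin (r + s) → ℝ,
        CliffordAlgebra.involute (u : CliffordAlgebra (Qrs r s)) * CliffordAlgebra.ι (Qrs r s) w *
            (↑u⁻¹ : CliffordAlgebra (Qrs r s)) = CliffordAlgebra.ι (Qrs r s) w' ∧
          Brs r s w' w' = Brs r s w w) ∧
    (∀ u v : (CliffordAlgebra (Qrs r s))ˣ, ∀ x : CliffordAlgebra (Qrs r s),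
      CliffordAlgebra.involute ((u * v : (CliffordAlgebra (Qrs r s))ˣ) : CliffordAlgebra (Qrs r s))
          * x * (↑(u * v)⁻¹ : CliffordAlgebra (Qrs r s)) =
        CliffordAlgebra.involute (u : CliffordAlgebra (Qrs r s)) *
          (CliffordAlgebra.involute (v : CliffordAlgebra (Qrs r s)) * x *
            (↑v⁻¹ : CliffordAlgebra (Qrs r s))) * (↑u⁻¹ : CliffordAlgebra (Qrs r s))) ∧
    (∀ C : (Fin (r + s) → ℝ) ≃ₗ[ℝ] (Fin (r + s) → ℝ),
      (∀ x y, Brs r s (C x) (C y) = Brs r s x y) →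
      ∃ u : (CliffordAlgebra (Qrs r s))ˣ, IsPin r s (u : CliffordAlgebra (Qrs r s)) ∧
        ∀ w, CliffordAlgebra.involute (u : CliffordAlgebra (Qrs r s)) *
            CliffordAlgebra.ι (Qrs r s) w * (↑u⁻¹ : CliffordAlgebra (Qrs r s)) =
          CliffordAlgebra.ι (Qrs r s) (C w)) ∧
    (∀ u : (CliffordAlgebra (Qrs r s))ˣ, IsPin r s (u : CliffordAlgebra (Qrs r s)) →
      ((∀ w, CliffordAlgebra.involute (u : CliffordAlgebra (Qrs r s)) *
          CliffordAlgebra.ι (Qrs r s) w * (↑u⁻¹ : CliffordAlgebra (Qrs r s)) =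
            CliffordAlgebra.ι (Qrs r s) w) ↔
        ((u : CliffordAlgebra (Qrs r s)) = 1 ∨ (u : CliffordAlgebra (Qrs r s)) = -1))) := by
  refine ⟨?_, ?_, ?_, ?_⟩
  · -- lands in vectors, isometrically
    rintro u ⟨l, hl, hu⟩ w
    have hu' : (u : CliffordAlgebra (Qrs r s)) = Pl r s l := hu
    refine ⟨rlist r s l w, ?_, rlist_isometry r s l (fun v hv => aniso_of_pm r s (hl v hv)) w w⟩
    rw [hu', unit_coe_inv_eq r s hl hu']
    exact conj_Pl r s l hl w
  · -- homomorphism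
    intro u v x
    rw [Units.val_mul, map_mul, mul_inv_rev, Units.val_mul]
    noncomm_ring
  · -- surjectivity
    intro C hC
    obtain ⟨l, hl, hCl⟩ := cd_norm r s
      { toFun := fun x => C x
        map_add' := C.map_add
        map_smul' := C.map_smul } (fun x y => hC x y)
    refine ⟨⟨Pl r s l, Pinv r s l, (Pl_mul_Pinv r s l hl).1, (Pl_mul_Pinv r s l hl).2⟩,
      ⟨l, hl, rfl⟩, fun w => ?_⟩
    show involute (Pl r s l) * ι (Qrs r s) w * Pinv r s l = ι (Qrs r s) (C w)
    rw [conj_Pl r s l hl w, show C w = rlist r s l w from hCl w]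
  · -- kernel
    rintro u ⟨l, hlm, hu⟩
    have hu' : (u : CliffordAlgebra (Qrs r s)) = Pl r s l := hu
    constructor
    · intro h
      have hcomm : ∀ w, involute (u : CliffordAlgebra (Qrs r s)) * ι (Qrs r s) w =
          ι (Qrs r s) w * (u : CliffordAlgebra (Qrs r s)) := by
        intro w
        have hstep : (involute (u : CliffordAlgebra (Qrs r s)) * ι (Qrs r s) w * ↑u⁻¹) * ↑u =
            involute (u : CliffordAlgebra (Qrs r s)) * ι (Qrs r s) w := by
          rw [mul_assoc, u.inv_mul, mul_one]
        rw [← hstep, h w]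
      obtain ⟨t, htx⟩ := central r s _ hcomm
      obtain ⟨q, hq, hrev⟩ := rev_Pl r s l hlm
      have h2 : reverse (u : CliffordAlgebra (Qrs r s)) * ↑u = algebraMap ℝ _ q := by
        rw [hu']; exact hrev
      rw [htx, reverse.commutes, ← map_mul] at h2
      have htq : t * t = q := amap_inj r s h2
      rcases hq with rfl | rfl
      · rcases mul_self_eq_one_iff.1 htq with rfl | rfl
        · left; rw [htx, map_one]
        · right; rw [htx, map_neg, map_one]
      · exfalso; nlinarith [mul_self_nonneg t, htq]
    · intro h
      have h2 : (u : CliffordAlgebra (Qrs r s)) * ↑u = 1 := by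
        rcases h with h1 | h1 <;> rw [h1] <;> simp
      have hinv : (↑u⁻¹ : CliffordAlgebra (Qrs r s)) = ↑u := by
        calc (↑u⁻¹ : CliffordAlgebra (Qrs r s)) = ↑u⁻¹ * (↑u * ↑u) := by rw [h2, mul_one]
          _ = (↑u⁻¹ * ↑u) * ↑u := by rw [mul_assoc]
          _ = ↑u := by rw [u.inv_mul, one_mul]
      intro w
      rcases h with h1 | h1
      · rw [hinv, h1, map_one, one_mul, mul_one]
      · rw [hinv, h1, map_neg, map_one]
        noncomm_ring

/-- The twisted adjoint representation restricted to `Pin(r,s)` preserves `ℝ^{r,s}`, is an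
isometry (so lands in `O(r,s)`), is a group homomorphism, is surjective onto `O(r,s)`, and
has kernel `{1, -1}`: it is a double covering `Pin(r,s) → O(r,s)`. -/
theorem stmt4 (r s : ℕ) :
    (∀ u : (CliffordAlgebra (Qrs r s))ˣ, IsPin r s (u : CliffordAlgebra (Qrs r s)) →
      ∀ w : Fin (r + s) → ℝ, ∃ w' : Fin (r + s) → ℝ,
        CliffordAlgebra.involute (u : CliffordAlgebra (Qrs r s)) * CliffordAlgebra.ι (Qrs r s) w *
            (↑u⁻¹ : CliffordAlgebra (Qrs r s)) = CliffordAlgebra.ι (Qrs r s) w' ∧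
          Brs r s w' w' = Brs r s w w) ∧
    (∀ u v : (CliffordAlgebra (Qrs r s))ˣ, ∀ x : CliffordAlgebra (Qrs r s),
      CliffordAlgebra.involute ((u * v : (CliffordAlgebra (Qrs r s))ˣ) : CliffordAlgebra (Qrs r s))
          * x * (↑(u * v)⁻¹ : CliffordAlgebra (Qrs r s)) =
        CliffordAlgebra.involute (u : CliffordAlgebra (Qrs r s)) *
          (CliffordAlgebra.involute (v : CliffordAlgebra (Qrs r s)) * x *
            (↑v⁻¹ : CliffordAlgebra (Qrs r s))) * (↑u⁻¹ : CliffordAlgebra (Qrs r s))) ∧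
    (∀ C : (Fin (r + s) → ℝ) ≃ₗ[ℝ] (Fin (r + s) → ℝ),
      (∀ x y, Brs r s (C x) (C y) = Brs r s x y) →
      ∃ u : (CliffordAlgebra (Qrs r s))ˣ, IsPin r s (u : CliffordAlgebra (Qrs r s)) ∧
        ∀ w, CliffordAlgebra.involute (u : CliffordAlgebra (Qrs r s)) *
            CliffordAlgebra.ι (Qrs r s) w * (↑u⁻¹ : CliffordAlgebra (Qrs r s)) =
          CliffordAlgebra.ι (Qrs r s) (C w)) ∧
    (∀ u : (CliffordAlgebra (Qrs r s))ˣ, IsPin r s (u : CliffordAlgebra (Qrs r s)) →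
      ((∀ w, CliffordAlgebra.involute (u : CliffordAlgebra (Qrs r s)) *
          CliffordAlgebra.ι (Qrs r s) w * (↑u⁻¹ : CliffordAlgebra (Qrs r s)) =
            CliffordAlgebra.ι (Qrs r s) w) ↔
        ((u : CliffordAlgebra (Qrs r s)) = 1 ∨ (u : CliffordAlgebra (Qrs r s)) = -1))) :=
  stmt4_aux r s
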